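/- Let T be a finite tree with at least two vertices, let v be a vertex of T of degree 1, and let K be a field. Then the induced subgraph T_{V∖{v}} (the tree obtained by removing v) is a neighborhood-minor of T, and the cut algebra K[T_{V∖{v}}] is an algebra retract of the cut algebra K[T]. -/

import Mathlib

open scoped Classical

noncomputable section

namespace CutPaper

open MvPolynomial

/-- An edge `e` is cut by the partition `A | Aᶜ` if it has exactly one endpoint in `A`. -/
def IsCutEdge {V : Type} (A : Set V) (e : Sym2 V) : Prop :=
  ∃ u v : V, e = s(u, v) ∧ u ∈ A ∧ v ∉ A

/-- The cut set of `A`: all edges of `G` with exactly one endpoint in `A`. -/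
def cutSet {V : Type} (G : SimpleGraph V) (A : Set V) : Set (Sym2 V) :=
  {e ∈ G.edgeSet | IsCutEdge A e}

lemma isCutEdge_compl {V : Type} (A : Set V) (e : Sym2 V) :
    IsCutEdge Aᶜ e ↔ IsCutEdge A e := by
  constructor <;> rintro ⟨u, v, rfl, hu, hv⟩
  · exact ⟨v, u, Sym2.eq_swap, Set.notMem_compl_iff.mp hv, hu⟩
  · exact ⟨v, u, Sym2.eq_swap, hv, not_not_intro hu⟩

/-- Two subsets determine the same unordered partition `A | Aᶜ` of `V`
iff they are equal or complementary. -/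
def partitionSetoid (V : Type) : Setoid (Set V) where
  r A B := B = A ∨ B = Aᶜ
  iseqv := by
    refine ⟨fun A => Or.inl rfl, @fun A B h => ?_, @fun A B C h1 h2 => ?_⟩
    · rcases h with rfl | rfl
      · exact Or.inl rfl
      · exact Or.inr (compl_compl A).symm
    · rcases h1 with rfl | rfl <;> rcases h2 with rfl | rfl
      · exact Or.inl rfl
      · exact Or.inr rfl
      · exact Or.inr rfl
      · exact Or.inl (compl_compl A)

/-- The unordered partitions `A | Aᶜ` of `V`, indexing the variables of `S_G`. -/
abbrev Partition (V : Type) := Quotient (partitionSetoid V)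

variable (K : Type) [CommRing K]

/-- The variable `q_{A|Aᶜ}` of the polynomial ring `S_G`. -/
def qPart {V : Type} (A : Set V) : MvPolynomial (Partition V) K :=
  X (Quotient.mk (partitionSetoid V) A)

/-- The monomial `u_A = ∏_{e ∈ Cut(A)} s_e · ∏_{e ∈ E \ Cut(A)} t_e`;
the variable `s_e` is `X (true, e)` and `t_e` is `X (false, e)`. -/
def cutMonomial {V : Type} [Finite V] (G : SimpleGraph V) (A : Set V) :
    MvPolynomial (Bool × Sym2 V) K :=
  ∏ e ∈ (Set.toFinite G.edgeSet).toFinset,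
    if IsCutEdge A e then X (true, e) else X (false, e)

lemma cutMonomial_compl {V : Type} [Finite V] (G : SimpleGraph V) (A : Set V) :
    cutMonomial K G Aᶜ = cutMonomial K G A := by
  unfold cutMonomial
  refine Finset.prod_congr rfl fun e _ => ?_
  by_cases h : IsCutEdge A e
  · rw [if_pos ((isCutEdge_compl A e).mpr h), if_pos h]
  · rw [if_neg fun hc => h ((isCutEdge_compl A e).mp hc), if_neg h]

/-- The `K`-algebra homomorphism `φ_G : S_G → R_G`, `q_{A|Aᶜ} ↦ u_A`. -/
def phi {V : Type} [Finite V] (G : SimpleGraph V) :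
    MvPolynomial (Partition V) K →ₐ[K] MvPolynomial (Bool × Sym2 V) K :=
  aeval fun p : Partition V =>
    Quotient.lift (cutMonomial K G)
      (fun A B hAB => by
        have h : B = A ∨ B = Aᶜ := hAB
        rcases h with rfl | rfl
        · rfl
        · exact (cutMonomial_compl K G A).symm) p

/-- The cut ideal `I_G = ker φ_G`. -/
def cutIdeal {V : Type} [Finite V] (G : SimpleGraph V) :
    Ideal (MvPolynomial (Partition V) K) :=
  RingHom.ker (phi K G)

/-- The cut algebra `K[G]`, i.e. the image of `φ_G`: the `K`-subalgebra of `R_G`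
generated by the monomials `u_A`. -/
def cutAlgebra {V : Type} [Finite V] (G : SimpleGraph V) :
    Subalgebra K (MvPolynomial (Bool × Sym2 V) K) :=
  Algebra.adjoin K {m | ∃ A : Set V, m = cutMonomial K G A}

/-- The generator `u_A` of the cut algebra, as an element of the cut algebra. -/
def uGen {V : Type} [Finite V] (G : SimpleGraph V) (A : Set V) : ↥(cutAlgebra K G) :=
  ⟨cutMonomial K G A, Algebra.subset_adjoin ⟨A, rfl⟩⟩

/-- An element of `S_G/I` is homogeneous of degree `d` if it is the class of a homogeneous
polynomial of degree `d`. -/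
def QuotHomogeneous {σ : Type} (I : Ideal (MvPolynomial σ K)) (d : ℕ)
    (x : MvPolynomial σ K ⧸ I) : Prop :=
  ∃ f : MvPolynomial σ K, f.IsHomogeneous d ∧ Ideal.Quotient.mk I f = x

/-- The cut algebra of `H` is an algebra retract of the cut algebra of `G`:
there are homogeneous `K`-algebra homomorphisms `ι : K[H] → K[G]` (injective) and
`π : K[G] → K[H]` with `π ∘ ι = id`. -/
def CutAlgebraRetract {V W : Type} [Finite V] [Finite W]
    (H : SimpleGraph W) (G : SimpleGraph V) : Prop :=
  ∃ (ι : (MvPolynomial (Partition W) K ⧸ cutIdeal K H) →ₐ[K]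
      (MvPolynomial (Partition V) K ⧸ cutIdeal K G))
    (π : (MvPolynomial (Partition V) K ⧸ cutIdeal K G) →ₐ[K]
      (MvPolynomial (Partition W) K ⧸ cutIdeal K H)),
    Function.Injective ι ∧
    (∀ d x, QuotHomogeneous K (cutIdeal K H) d x →
      ∃ d', QuotHomogeneous K (cutIdeal K G) d' (ι x)) ∧
    (∀ d x, QuotHomogeneous K (cutIdeal K G) d x →
      ∃ d', QuotHomogeneous K (cutIdeal K H) d' (π x)) ∧
    π.comp ι = AlgHom.id K _

/-- The graph obtained from `G` by contracting the edge `{u, v}`: the vertex `u` is removed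
and merged into `v`. -/
def contractEdge {V : Type} (G : SimpleGraph V) (u v : V) :
    SimpleGraph {x : V // x ≠ u} where
  Adj a b := a ≠ b ∧
    (G.Adj a b ∨ ((a : V) = v ∧ G.Adj u b) ∨ ((b : V) = v ∧ G.Adj a u))
  symm := ⟨by
    rintro a b ⟨hne, h | ⟨ha, h⟩ | ⟨hb, h⟩⟩
    · exact ⟨hne.symm, Or.inl h.symm⟩
    · exact ⟨hne.symm, Or.inr (Or.inr ⟨ha, h.symm⟩)⟩
    · exact ⟨hne.symm, Or.inr (Or.inl ⟨hb, h.symm⟩)⟩⟩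
  loopless := ⟨fun a h => h.1 rfl⟩

/-- The induced subgraph `G_W` is a neighborhood-minor of `G`: `W` and `W' = Wᶜ` are nonempty
and there is a vertex `v ∈ W` with `W ∩ N_G(W') ⊆ N_{G_W}[v]`. -/
def IsNeighborhoodMinor {V : Type} (G : SimpleGraph V) (W : Set V) : Prop :=
  W.Nonempty ∧ Wᶜ.Nonempty ∧
    ∃ v ∈ W, ∀ x ∈ W, (∃ y ∈ Wᶜ, G.Adj y x) → x = v ∨ G.Adj v x

/-- The cut vector `δ_A ∈ {0,1}^E` of the partition `A | Aᶜ`. -/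
def cutVector {V : Type} (G : SimpleGraph V) (A : Set V) : ↥G.edgeSet → ℝ :=
  fun e => if IsCutEdge A (e : Sym2 V) then 1 else 0

/-- The cut polytope `Cut^□(G) ⊆ ℝ^E`: the convex hull of the cut vectors. -/
def cutPolytope {V : Type} (G : SimpleGraph V) : Set (↥G.edgeSet → ℝ) :=
  convexHull ℝ {x | ∃ A : Set V, x = cutVector G A}

/-- `F` is a face of `P`: either a trivial face (`P` or `∅`), or the intersection of `P`
with a supporting hyperplane. -/
def IsFace {α : Type} (P F : Set (α → ℝ)) : Prop :=
  F = P ∨ F = ∅ ∨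
    ∃ (φ : (α → ℝ) →ₗ[ℝ] ℝ) (c : ℝ), φ ≠ 0 ∧
      (∀ x ∈ P, φ x ≤ c) ∧ F = P ∩ {x | φ x = c}

/-- `P` and `Q` are affinely isomorphic: there is a bijective map from `P` onto `Q`
extending to an affine map. -/
def AffinelyIsomorphic {α β : Type} (P : Set (α → ℝ)) (Q : Set (β → ℝ)) : Prop :=
  ∃ f : (α → ℝ) →ᵃ[ℝ] (β → ℝ), Set.InjOn f P ∧ f '' P = Q

/-- The monomial `z · ∏_{e ∈ Cut(A)} y_e` of the polytopal algebra of the cut polytope;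
the variable `z` is `X none` and `y_e` is `X (some e)`. -/
def polytopeMonomial {V : Type} [Finite V] (G : SimpleGraph V) (A : Set V) :
    MvPolynomial (Option (Sym2 V)) K :=
  X none * ∏ e ∈ (Set.toFinite (cutSet G A)).toFinset, X (some e)

/-- The polytopal algebra `K[Cut^□(G)]`: the subalgebra of `K[y_e (e ∈ E), z]` generated by
the monomials `z · y^{δ_A}` attached to the lattice points (= cut vectors) of `Cut^□(G)`. -/
def polytopalAlgebra {V : Type} [Finite V] (G : SimpleGraph V) :
    Subalgebra K (MvPolynomial (Option (Sym2 V)) K) :=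
  Algebra.adjoin K {m | ∃ A : Set V, m = polytopeMonomial K G A}

/-- `G'` is a combinatorial retract of `G`: it is obtained from `G` by a finite sequence of
edge contractions and neighborhood-minors. -/
inductive CombinatorialRetract : ∀ {V W : Type}, SimpleGraph V → SimpleGraph W → Prop
  | refl {V : Type} (G : SimpleGraph V) : CombinatorialRetract G G
  | contract {V W : Type} (G : SimpleGraph V) (u v : V) (huv : G.Adj u v)
      (G' : SimpleGraph W) (h : CombinatorialRetract (contractEdge G u v) G') :
      CombinatorialRetract G G'
  | nbhdMinor {V W : Type} (G : SimpleGraph V) (S : Set V)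
      (hS : IsNeighborhoodMinor G S) (G' : SimpleGraph W)
      (h : CombinatorialRetract (SimpleGraph.induce S G) G') :
      CombinatorialRetract G G'


/-! ### Auxiliary development for stmt17 -/

lemma isCutEdge_mk {α : Type} {A : Set α} {x y : α} :
    IsCutEdge A s(x, y) ↔ ((x ∈ A ∧ y ∉ A) ∨ (y ∈ A ∧ x ∉ A)) := by
  constructor
  · rintro ⟨a, b, h, ha, hb⟩
    rcases Sym2.eq_iff.mp h with ⟨rfl, rfl⟩ | ⟨rfl, rfl⟩
    · exact Or.inl ⟨ha, hb⟩
    · exact Or.inr ⟨ha, hb⟩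
  · rintro (⟨h1, h2⟩ | ⟨h1, h2⟩)
    · exact ⟨x, y, rfl, h1, h2⟩
    · exact ⟨y, x, Sym2.eq_swap, h1, h2⟩

section Leaf

variable {V : Type} {v w : V}

/-- The unique neighbour `w` of the leaf `v`, as an element of `{v}ᶜ`. -/
def wS (hw : w ≠ v) : ({v}ᶜ : Set V) := ⟨w, Set.mem_compl_singleton_iff.mpr hw⟩

/-- Extend a subset of `{v}ᶜ` to a subset of `V`, putting `v` on the same side as `w`. -/
def extSet (hw : w ≠ v) (B : Set ({v}ᶜ : Set V)) : Set V :=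
  (Subtype.val '' B) ∪ {x | x = v ∧ wS hw ∈ B}

/-- Restrict a subset of `V` to a subset of `{v}ᶜ`. -/
def resSet (v : V) (A : Set V) : Set ({v}ᶜ : Set V) := Subtype.val ⁻¹' A

lemma mem_extSet_val (hw : w ≠ v) (B : Set ({v}ᶜ : Set V)) (x : ({v}ᶜ : Set V)) :
    (x : V) ∈ extSet hw B ↔ x ∈ B := by
  constructor
  · rintro (⟨b, hb, hbx⟩ | ⟨hxv, -⟩)
    · rwa [Subtype.val_injective hbx] at hb
    · exact absurd hxv x.2
  · exact fun h => Or.inl ⟨x, h, rfl⟩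

lemma mem_extSet_v (hw : w ≠ v) (B : Set ({v}ᶜ : Set V)) :
    v ∈ extSet hw B ↔ wS hw ∈ B := by
  constructor
  · rintro (⟨b, -, hbv⟩ | ⟨-, h⟩)
    · exact absurd hbv b.2
    · exact h
  · exact fun h => Or.inr ⟨rfl, h⟩

lemma extSet_compl (hw : w ≠ v) (B : Set ({v}ᶜ : Set V)) :
    extSet hw Bᶜ = (extSet hw B)ᶜ := by
  ext x
  by_cases hx : x = v
  · subst hx
    rw [Set.mem_compl_iff, mem_extSet_v, mem_extSet_v]; rfl
  · have hx' : x ∈ ({v}ᶜ : Set V) := Set.mem_compl_singleton_iff.mpr hx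
    have := mem_extSet_val hw Bᶜ ⟨x, hx'⟩
    have h2 := mem_extSet_val hw B ⟨x, hx'⟩
    rw [Set.mem_compl_iff]
    simp only [Subtype.coe_mk] at this h2
    rw [this, h2]; rfl

lemma resSet_extSet (hw : w ≠ v) (B : Set ({v}ᶜ : Set V)) :
    resSet v (extSet hw B) = B := by
  ext x
  exact mem_extSet_val hw B x

lemma resSet_compl (v : V) (A : Set V) : resSet v Aᶜ = (resSet v A)ᶜ := rfl

/-- The map on unordered partitions induced by `extSet`. -/
def extPart (hw : w ≠ v) : Partition ({v}ᶜ : Set V) → Partition V :=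
  Quotient.lift (fun B => Quotient.mk (partitionSetoid V) (extSet hw B))
    (by
      intro B B' hBB'
      rcases (hBB' : B' = B ∨ B' = Bᶜ) with rfl | rfl
      · rfl
      · exact Quotient.sound (Or.inr (extSet_compl hw B)))

/-- The map on unordered partitions induced by `resSet`. -/
def resPart (v : V) : Partition V → Partition ({v}ᶜ : Set V) :=
  Quotient.lift (fun A => Quotient.mk (partitionSetoid ({v}ᶜ : Set V)) (resSet v A))
    (by
      intro A A' hAA'
      rcases (hAA' : A' = A ∨ A' = Aᶜ) with rfl | rfl
      · rfl
      · exact Quotient.sound (Or.inr (resSet_compl v A)))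

lemma resPart_extPart (hw : w ≠ v) (p : Partition ({v}ᶜ : Set V)) :
    resPart v (extPart hw p) = p := by
  induction p using Quotient.ind with
  | _ B => exact congrArg (Quotient.mk _) (resSet_extSet hw B)

end Leaf

set_option linter.unusedSectionVars false
set_option linter.unusedVariables false

section LeafGraph

variable {V : Type} [Fintype V] {v w : V} (G : SimpleGraph V)

lemma vw_not_mem_image (hw : w ≠ v) (s : Finset (Sym2 ({v}ᶜ : Set V))) :
    s(v, w) ∉ s.image (Sym2.map (Subtype.val : ({v}ᶜ : Set V) → V)) := by
  intro hmem
  rcases Finset.mem_image.mp hmem with ⟨e', -, he'⟩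
  have : v ∈ Sym2.map (Subtype.val : ({v}ᶜ : Set V) → V) e' := by
    rw [he']; exact Sym2.mem_mk_left v w
  rcases Sym2.mem_map.mp this with ⟨a, -, ha⟩
  exact a.2 (by simp [ha])

lemma edgeFinset_decomp (hvw : G.Adj v w) (huniq : ∀ x, G.Adj v x → x = w) :
    (Set.toFinite G.edgeSet).toFinset =
      insert s(v, w) (((Set.toFinite (SimpleGraph.induce ({v}ᶜ : Set V) G).edgeSet).toFinset).image
        (Sym2.map (Subtype.val : ({v}ᶜ : Set V) → V))) := by
  ext e
  simp only [Set.Finite.mem_toFinset, Finset.mem_insert, Finset.mem_image]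
  induction e using Sym2.ind with
  | _ x y =>
    constructor
    · intro hxy
      rw [SimpleGraph.mem_edgeSet] at hxy
      by_cases hx : x = v
      · subst hx
        exact Or.inl (by rw [huniq y hxy])
      · by_cases hy : y = v
        · subst hy
          rw [huniq x hxy.symm, Sym2.eq_swap]
          exact Or.inl rfl
        · refine Or.inr ⟨s(⟨x, Set.mem_compl_singleton_iff.mpr hx⟩,
            ⟨y, Set.mem_compl_singleton_iff.mpr hy⟩), ?_, ?_⟩
          · exact hxy
          · rw [Sym2.map_pair_eq]
    · rintro (h | ⟨e', he', hee⟩)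
      · rw [h]; exact hvw
      · rw [← hee]
        induction e' using Sym2.ind with
        | _ a b =>
          rw [Sym2.map_pair_eq, SimpleGraph.mem_edgeSet]
          exact he'

lemma isCutEdge_extSet_emb (hw : w ≠ v) (B : Set ({v}ᶜ : Set V))
    (e : Sym2 ({v}ᶜ : Set V)) :
    IsCutEdge (extSet hw B) (Sym2.map (Subtype.val : ({v}ᶜ : Set V) → V) e) ↔ IsCutEdge B e := by
  induction e using Sym2.ind with
  | _ a b =>
    rw [Sym2.map_pair_eq, isCutEdge_mk, isCutEdge_mk,
      mem_extSet_val hw B a, mem_extSet_val hw B b]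

lemma isCutEdge_resSet_emb (A : Set V) (e : Sym2 ({v}ᶜ : Set V)) :
    IsCutEdge A (Sym2.map (Subtype.val : ({v}ᶜ : Set V) → V) e) ↔ IsCutEdge (resSet v A) e := by
  induction e using Sym2.ind with
  | _ a b =>
    rw [Sym2.map_pair_eq, isCutEdge_mk, isCutEdge_mk]
    rfl

lemma not_isCutEdge_extSet_vw (hw : w ≠ v) (B : Set ({v}ᶜ : Set V)) :
    ¬ IsCutEdge (extSet hw B) s(v, w) := by
  have hv : v ∈ extSet hw B ↔ wS hw ∈ B := mem_extSet_v hw B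
  have hwm : w ∈ extSet hw B ↔ wS hw ∈ B := mem_extSet_val hw B (wS hw)
  rw [isCutEdge_mk]
  rintro (⟨h1, h2⟩ | ⟨h1, h2⟩)
  · exact h2 (hwm.mpr (hv.mp h1))
  · exact h2 (hv.mpr (hwm.mp h1))

end LeafGraph

section LeafMonomial

variable {V : Type} [Fintype V] {v w : V} (K : Type) [CommRing K] (G : SimpleGraph V)

lemma v_not_mem_emb (e : Sym2 ({v}ᶜ : Set V)) :
    v ∉ Sym2.map (Subtype.val : ({v}ᶜ : Set V) → V) e := by
  intro hmem
  rcases Sym2.mem_map.mp hmem with ⟨a, -, ha⟩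
  exact a.2 (by simp [ha])

lemma phi_X (A : Set V) :
    phi K G (X (Quotient.mk (partitionSetoid V) A)) = cutMonomial K G A := by
  simp only [phi, aeval_X]
  rfl

lemma cutMonomial_decomp (hvw : G.Adj v w) (huniq : ∀ x, G.Adj v x → x = w) (A : Set V) :
    cutMonomial K G A =
      (if IsCutEdge A s(v, w) then (X (true, s(v, w)) : MvPolynomial (Bool × Sym2 V) K)
        else X (false, s(v, w))) *
      ∏ e ∈ (Set.toFinite (SimpleGraph.induce ({v}ᶜ : Set V) G).edgeSet).toFinset,
        (if IsCutEdge (resSet v A) e then X (true, Sym2.map Subtype.val e)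
          else X (false, Sym2.map Subtype.val e)) := by
  have hw : w ≠ v := hvw.ne'
  unfold cutMonomial
  rw [edgeFinset_decomp G hvw huniq,
    Finset.prod_insert (vw_not_mem_image hw _),
    Finset.prod_image (fun x _ y _ h => Sym2.map.injective Subtype.val_injective h)]
  refine congrArg _ (Finset.prod_congr rfl fun e _ => ?_)
  rw [isCutEdge_resSet_emb]

/-- The total map `V → {v}ᶜ` sending `v` to `w` and fixing everything else. -/
def toS (hw : w ≠ v) : V → ({v}ᶜ : Set V) :=
  fun x => if h : x = v then wS hw else ⟨x, Set.mem_compl_singleton_iff.mpr h⟩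

lemma map_toS_emb (hw : w ≠ v) (e : Sym2 ({v}ᶜ : Set V)) :
    Sym2.map (toS hw) (Sym2.map (Subtype.val : ({v}ᶜ : Set V) → V) e) = e := by
  induction e using Sym2.ind with
  | _ a b =>
    rw [Sym2.map_pair_eq, Sym2.map_pair_eq]
    have key : ∀ a : ({v}ᶜ : Set V), toS hw (a : V) = a := by
      intro a
      have : ¬ (a : V) = v := Set.mem_compl_singleton_iff.mp a.2
      simp only [toS, dif_neg this]
    rw [key a, key b]

/-- The algebra map `R_G → R_H` collapsing the leaf edge variables to `1`. -/
def rhoMap (v : V) (hw : w ≠ v) :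
    MvPolynomial (Bool × Sym2 V) K →ₐ[K] MvPolynomial (Bool × Sym2 ({v}ᶜ : Set V)) K :=
  aeval fun p => if v ∈ p.2 then 1 else X (p.1, Sym2.map (toS hw) p.2)

lemma key_pi (hvw : G.Adj v w) (huniq : ∀ x, G.Adj v x → x = w) :
    (phi K (SimpleGraph.induce ({v}ᶜ : Set V) G)).comp (rename (resPart v)) =
      (rhoMap K v hvw.ne').comp (phi K G) := by
  apply MvPolynomial.algHom_ext
  intro p
  induction p using Quotient.ind with
  | _ A =>
    rw [AlgHom.comp_apply, AlgHom.comp_apply, rename_X]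
    have hres : resPart v (Quotient.mk (partitionSetoid V) A) =
        Quotient.mk (partitionSetoid ({v}ᶜ : Set V)) (resSet v A) := rfl
    rw [hres, phi_X, phi_X, cutMonomial_decomp K G hvw huniq, map_mul,
      apply_ite (⇑(rhoMap K v hvw.ne')), map_prod]
    have h1 : rhoMap K v hvw.ne' (X (true, s(v, w)) : MvPolynomial (Bool × Sym2 V) K) = 1 := by
      simp only [rhoMap, aeval_X, if_pos (Sym2.mem_mk_left v w)]
    have h2 : rhoMap K v hvw.ne' (X (false, s(v, w)) : MvPolynomial (Bool × Sym2 V) K) = 1 := by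
      simp only [rhoMap, aeval_X, if_pos (Sym2.mem_mk_left v w)]
    rw [h1, h2, ite_self, one_mul]
    unfold cutMonomial
    refine Finset.prod_congr rfl fun e _ => ?_
    rw [apply_ite (⇑(rhoMap K v hvw.ne'))]
    have h3 : ∀ b : Bool, rhoMap K v hvw.ne'
        (X (b, Sym2.map (Subtype.val : ({v}ᶜ : Set V) → V) e) : MvPolynomial (Bool × Sym2 V) K) =
        X (b, e) := by
      intro b
      simp only [rhoMap, aeval_X, if_neg (v_not_mem_emb e), map_toS_emb]
    rw [h3, h3]

/-- The algebra map `R_H → R_G` inserting the leaf edge `t`-variable at a chosen edge `e0`. -/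
def tauMap (hw : w ≠ v) (e0 : Sym2 ({v}ᶜ : Set V)) :
    MvPolynomial (Bool × Sym2 ({v}ᶜ : Set V)) K →ₐ[K] MvPolynomial (Bool × Sym2 V) K :=
  aeval fun p => X (p.1, Sym2.map Subtype.val p.2) *
    (if p.2 = e0 then X (false, s(v, w)) else 1)

lemma key_iota (hvw : G.Adj v w) (huniq : ∀ x, G.Adj v x → x = w)
    (e0 : Sym2 ({v}ᶜ : Set V))
    (he0 : e0 ∈ (Set.toFinite (SimpleGraph.induce ({v}ᶜ : Set V) G).edgeSet).toFinset) :
    (phi K G).comp (rename (extPart hvw.ne')) =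
      (tauMap K hvw.ne' e0).comp (phi K (SimpleGraph.induce ({v}ᶜ : Set V) G)) := by
  apply MvPolynomial.algHom_ext
  intro p
  induction p using Quotient.ind with
  | _ B =>
    rw [AlgHom.comp_apply, AlgHom.comp_apply, rename_X]
    have hext : extPart hvw.ne' (Quotient.mk (partitionSetoid ({v}ᶜ : Set V)) B) =
        Quotient.mk (partitionSetoid V) (extSet hvw.ne' B) := rfl
    rw [hext, phi_X, phi_X, cutMonomial_decomp K G hvw huniq,
      if_neg (not_isCutEdge_extSet_vw hvw.ne' B), resSet_extSet]
    unfold cutMonomial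
    rw [map_prod]
    have heach : ∀ e : Sym2 ({v}ᶜ : Set V),
        tauMap K hvw.ne' e0 (if IsCutEdge B e then (X (true, e) :
          MvPolynomial (Bool × Sym2 ({v}ᶜ : Set V)) K) else X (false, e)) =
        (if IsCutEdge B e then (X (true, Sym2.map Subtype.val e) :
          MvPolynomial (Bool × Sym2 V) K) else X (false, Sym2.map Subtype.val e)) *
        (if e = e0 then X (false, s(v, w)) else 1) := by
      intro e
      rw [apply_ite (⇑(tauMap K hvw.ne' e0))]
      simp only [tauMap, aeval_X]
      rw [ite_mul]
    calc (X (false, s(v, w)) : MvPolynomial (Bool × Sym2 V) K) *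
          ∏ e ∈ (Set.toFinite (SimpleGraph.induce ({v}ᶜ : Set V) G).edgeSet).toFinset,
            (if IsCutEdge B e then (X (true, Sym2.map Subtype.val e) :
              MvPolynomial (Bool × Sym2 V) K) else X (false, Sym2.map Subtype.val e))
        = (∏ e ∈ (Set.toFinite (SimpleGraph.induce ({v}ᶜ : Set V) G).edgeSet).toFinset,
            (if IsCutEdge B e then (X (true, Sym2.map Subtype.val e) :
              MvPolynomial (Bool × Sym2 V) K) else X (false, Sym2.map Subtype.val e))) *
          ∏ e ∈ (Set.toFinite (SimpleGraph.induce ({v}ᶜ : Set V) G).edgeSet).toFinset,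
            (if e = e0 then (X (false, s(v, w)) : MvPolynomial (Bool × Sym2 V) K) else 1) := by
          rw [Finset.prod_ite_eq' _ e0 (fun _ => (X (false, s(v, w)) :
            MvPolynomial (Bool × Sym2 V) K)), if_pos he0, mul_comm]
      _ = _ := by
          rw [← Finset.prod_mul_distrib]
          exact (Finset.prod_congr rfl fun e _ => (heach e).symm)

end LeafMonomial

section Retract

variable {V : Type} [Fintype V] {v w : V} (K : Type) [Field K] (G : SimpleGraph V)

lemma cutAlgebraRetract_of_leaf (hvw : G.Adj v w) (huniq : ∀ x, G.Adj v x → x = w) :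
    CutAlgebraRetract K (SimpleGraph.induce ({v}ᶜ : Set V) G) G := by
  classical
  set H := SimpleGraph.induce ({v}ᶜ : Set V) G with hH
  -- the projection always exists
  have hπker : ∀ f ∈ cutIdeal K G,
      ((Ideal.Quotient.mkₐ K (cutIdeal K H)).comp
        (rename (resPart v) : MvPolynomial (Partition V) K →ₐ[K] _)) f = 0 := by
    intro f hf
    rw [AlgHom.comp_apply, Ideal.Quotient.mkₐ_eq_mk, Ideal.Quotient.eq_zero_iff_mem]
    show rename (resPart v) f ∈ RingHom.ker (phi K H)
    rw [RingHom.mem_ker]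
    have hkey := DFunLike.congr_fun (key_pi K G hvw huniq) f
    rw [AlgHom.comp_apply, AlgHom.comp_apply] at hkey
    rw [hkey, RingHom.mem_ker.mp hf, map_zero]
  set πhat := Ideal.Quotient.liftₐ (cutIdeal K G)
    ((Ideal.Quotient.mkₐ K (cutIdeal K H)).comp
      (rename (resPart v) : MvPolynomial (Partition V) K →ₐ[K] _)) hπker with hπhat
  have hπmk : ∀ f : MvPolynomial (Partition V) K,
      πhat (Ideal.Quotient.mk (cutIdeal K G) f) =
        Ideal.Quotient.mk (cutIdeal K H) (rename (resPart v) f) := by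
    intro f
    rw [hπhat, Ideal.Quotient.liftₐ_apply]
    rfl
  have hπhom : ∀ d x, QuotHomogeneous K (cutIdeal K G) d x →
      ∃ d', QuotHomogeneous K (cutIdeal K H) d' (πhat x) := by
    rintro d x ⟨f, hf, rfl⟩
    exact ⟨d, rename (resPart v) f, hf.rename_isHomogeneous, (hπmk f).symm⟩
  by_cases hcase : ((Set.toFinite (SimpleGraph.induce ({v}ᶜ : Set V) G).edgeSet).toFinset).Nonempty
  · -- the induced graph has an edge: use the variable substitution `extPart`
    obtain ⟨e0, he0⟩ := hcase
    have hιker : ∀ f ∈ cutIdeal K H,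
        ((Ideal.Quotient.mkₐ K (cutIdeal K G)).comp
          (rename (extPart hvw.ne') : MvPolynomial (Partition ({v}ᶜ : Set V)) K →ₐ[K] _)) f = 0 := by
      intro f hf
      rw [AlgHom.comp_apply, Ideal.Quotient.mkₐ_eq_mk, Ideal.Quotient.eq_zero_iff_mem]
      show rename (extPart hvw.ne') f ∈ RingHom.ker (phi K G)
      rw [RingHom.mem_ker]
      have hkey := DFunLike.congr_fun (key_iota K G hvw huniq e0 he0) f
      rw [AlgHom.comp_apply, AlgHom.comp_apply] at hkey
      rw [hkey, RingHom.mem_ker.mp hf, map_zero]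
    set ιhat := Ideal.Quotient.liftₐ (cutIdeal K H)
      ((Ideal.Quotient.mkₐ K (cutIdeal K G)).comp
        (rename (extPart hvw.ne') : MvPolynomial (Partition ({v}ᶜ : Set V)) K →ₐ[K] _)) hιker
      with hιhat
    have hιmk : ∀ f : MvPolynomial (Partition ({v}ᶜ : Set V)) K,
        ιhat (Ideal.Quotient.mk (cutIdeal K H) f) =
          Ideal.Quotient.mk (cutIdeal K G) (rename (extPart hvw.ne') f) := by
      intro f
      rw [hιhat, Ideal.Quotient.liftₐ_apply]
      rfl
    have hcomp : πhat.comp ιhat = AlgHom.id K _ := by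
      apply Ideal.Quotient.algHom_ext
      apply MvPolynomial.algHom_ext
      intro p
      rw [AlgHom.comp_apply, AlgHom.comp_apply, AlgHom.comp_apply, Ideal.Quotient.mkₐ_eq_mk,
        hιmk, hπmk, rename_X, rename_X, resPart_extPart, AlgHom.id_apply]
    refine ⟨ιhat, πhat, ?_, ?_, hπhom, hcomp⟩
    · intro a b hab
      have h1 := DFunLike.congr_fun hcomp a
      have h2 := DFunLike.congr_fun hcomp b
      simp only [AlgHom.comp_apply, AlgHom.id_apply] at h1 h2
      rw [← h1, ← h2, hab]
    · rintro d x ⟨f, hf, rfl⟩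
      exact ⟨d, rename (extPart hvw.ne') f, hf.rename_isHomogeneous, (hιmk f).symm⟩
  · -- no edges in the induced graph: the cut algebra of `H` is trivial
    have hE : (Set.toFinite (SimpleGraph.induce ({v}ᶜ : Set V) G).edgeSet).toFinset = ∅ :=
      Finset.not_nonempty_iff_eq_empty.mp hcase
    have hmon : ∀ B : Set ({v}ᶜ : Set V), cutMonomial K H B = 1 := by
      intro B
      unfold cutMonomial
      rw [hE, Finset.prod_empty]
    have hφ1 : ∀ p : Partition ({v}ᶜ : Set V), phi K H (X p) = 1 := by
      intro p
      induction p using Quotient.ind with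
      | _ B => rw [phi_X, hmon]
    set ε : MvPolynomial (Partition ({v}ᶜ : Set V)) K →ₐ[K] K :=
      aeval (fun _ => (1 : K)) with hε
    have hphiH : (phi K H) = (Algebra.ofId K _).comp ε := by
      apply MvPolynomial.algHom_ext
      intro p
      rw [hφ1, AlgHom.comp_apply, hε, aeval_X, map_one]
    have hιker : ∀ f ∈ cutIdeal K H,
        ((Algebra.ofId K (MvPolynomial (Partition V) K ⧸ cutIdeal K G)).comp ε) f = 0 := by
      intro f hf
      have h0 : phi K H f = 0 := RingHom.mem_ker.mp hf
      rw [hphiH, AlgHom.comp_apply] at h0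
      have hε0 : ε f = 0 := by
        have := MvPolynomial.C_injective (Bool × Sym2 ({v}ᶜ : Set V)) K
        apply this
        rw [map_zero]
        exact h0
      rw [AlgHom.comp_apply, hε0, map_zero]
    set ιhat := Ideal.Quotient.liftₐ (cutIdeal K H)
      ((Algebra.ofId K (MvPolynomial (Partition V) K ⧸ cutIdeal K G)).comp ε) hιker with hιhat
    have hιmk : ∀ f : MvPolynomial (Partition ({v}ᶜ : Set V)) K,
        ιhat (Ideal.Quotient.mk (cutIdeal K H) f) =
          algebraMap K _ (ε f) := by
      intro f
      rw [hιhat, Ideal.Quotient.liftₐ_apply]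
      rfl
    have hX1 : ∀ p : Partition ({v}ᶜ : Set V),
        Ideal.Quotient.mk (cutIdeal K H) (X p) = 1 := by
      intro p
      have : (X p : MvPolynomial (Partition ({v}ᶜ : Set V)) K) - 1 ∈ cutIdeal K H := by
        show _ ∈ RingHom.ker (phi K H)
        rw [RingHom.mem_ker, map_sub, map_one, hφ1, sub_self]
      have h := Ideal.Quotient.eq.mpr this
      rwa [map_one] at h
    have hcomp : πhat.comp ιhat = AlgHom.id K _ := by
      apply Ideal.Quotient.algHom_ext
      apply MvPolynomial.algHom_ext
      intro p
      simp only [AlgHom.comp_apply, AlgHom.id_apply, Ideal.Quotient.mkₐ_eq_mk]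
      rw [hX1, map_one, map_one]
    refine ⟨ιhat, πhat, ?_, ?_, hπhom, hcomp⟩
    · intro a b hab
      have h1 := DFunLike.congr_fun hcomp a
      have h2 := DFunLike.congr_fun hcomp b
      simp only [AlgHom.comp_apply, AlgHom.id_apply] at h1 h2
      rw [← h1, ← h2, hab]
    · rintro d x ⟨f, hf, rfl⟩
      refine ⟨0, C (ε f), isHomogeneous_C _ _, ?_⟩
      rw [hιmk, ← MvPolynomial.algebraMap_eq, ← Ideal.Quotient.mkₐ_eq_mk K (cutIdeal K G),
        AlgHom.commutes]

end Retract

theorem stmt17 {V : Type} [Fintype V] (K : Type) [Field K]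
    (G : SimpleGraph V) (hT : G.IsTree) (hcard : 2 ≤ Nat.card V)
    (v : V) (hdeg : ∃! w : V, G.Adj v w) :
    IsNeighborhoodMinor G ({v}ᶜ : Set V) ∧
      CutAlgebraRetract K (SimpleGraph.induce ({v}ᶜ : Set V) G) G := by
  obtain ⟨w, hvw, huniq⟩ := hdeg
  have hwv : w ∈ ({v}ᶜ : Set V) := Set.mem_compl_singleton_iff.mpr hvw.ne'
  constructor
  · refine ⟨⟨w, hwv⟩, ?_, w, hwv, ?_⟩
    · rw [compl_compl]
      exact ⟨v, rfl⟩
    · rintro x hx ⟨y, hy, hadj⟩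
      rw [compl_compl, Set.mem_singleton_iff] at hy
      subst hy
      exact Or.inl (huniq x hadj)
  · exact cutAlgebraRetract_of_leaf K G hvw (fun x hx => huniq x hx)

end CutPaper
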